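/- For any n > i ≥ 3, the Dirichlet Cheeger constant of the tadpole graph T_{n,i} equals 1/(n-1), i.e., h_D(T_{n,i}) = 1/(n-1). -/
import Mathlib


open scoped Classical

noncomputable section

/-- The term `|f x - f y| ^ p` as a function on unordered pairs. -/
noncomputable def edgeTerm {V : Type*} (p : ℝ) (f : V → ℝ) : Sym2 V → ℝ :=
  Sym2.lift ⟨fun x y => |f x - f y| ^ p, fun x y => by dsimp only; rw [abs_sub_comm]⟩

/-- The `p`-Rayleigh quotient of a function on a finite graph. -/
noncomputable def rayleigh {V : Type*} [Fintype V] [DecidableEq V] (G : SimpleGraph V)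
    (p : ℝ) (f : V → ℝ) : ℝ :=
  (∑ e ∈ G.edgeFinset, edgeTerm p f e) / ∑ v, |f v| ^ p

/-- The first `p`-Dirichlet eigenvalue: infimum of the Rayleigh quotient over nonzero
functions vanishing on the boundary (vertices of degree one). -/
noncomputable def lambda1 {V : Type*} [Fintype V] [DecidableEq V] (G : SimpleGraph V)
    (p : ℝ) : ℝ :=
  sInf {r | ∃ f : V → ℝ, f ≠ 0 ∧ (∀ v, G.degree v = 1 → f v = 0) ∧ r = rayleigh G p f}

/-- The tadpole graph `T_{n,i}` on vertices `0,…,n-1` (vertex `t_k` is `k-1`):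
edges `t_k t_{k+1}` for `1 ≤ k ≤ n-1` together with the edge `t_1 t_i`. -/
def tadpole (n i : ℕ) : SimpleGraph (Fin n) :=
  SimpleGraph.fromRel (fun a b => a.val + 1 = b.val ∨ (a.val = 0 ∧ b.val = i - 1))

/-- The path graph on `n` vertices `0,…,n-1`. -/
def pathG (n : ℕ) : SimpleGraph (Fin n) :=
  SimpleGraph.fromRel (fun a b : Fin n => a.val + 1 = b.val)

/-- The set of edges of `G` with exactly one endpoint in `U`. -/
noncomputable def crossEdges {V : Type*} [Fintype V] [DecidableEq V] (G : SimpleGraph V)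
    (U : Finset V) : Finset (Sym2 V) :=
  G.edgeFinset.filter fun e =>
    Sym2.lift ⟨fun x y => (x ∈ U ∧ y ∉ U) ∨ (x ∉ U ∧ y ∈ U),
      fun x y => by simp only [eq_iff_iff]; tauto⟩ e

/-- The Dirichlet Cheeger constant: infimum of `|E(U,Uᶜ)|/|U|` over nonempty sets `U`
of interior vertices (vertices of degree at least two). -/
noncomputable def dCheeger {V : Type*} [Fintype V] [DecidableEq V] (G : SimpleGraph V) : ℝ :=
  sInf {r | ∃ U : Finset V, U.Nonempty ∧ (∀ v ∈ U, 2 ≤ G.degree v) ∧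
    r = ((crossEdges G U).card : ℝ) / U.card}


lemma tadpole_adj (n i : ℕ) (a b : Fin n) :
    (tadpole n i).Adj a b ↔ a ≠ b ∧ (a.val+1 = b.val ∨ b.val+1 = a.val ∨
      (a.val = 0 ∧ b.val = i-1) ∨ (b.val = 0 ∧ a.val = i-1)) := by
  simp only [tadpole, SimpleGraph.fromRel_adj]
  tauto

lemma adj_last {n i : ℕ} (hi : 3 ≤ i) (hn : i < n) (a : Fin n) :
    (tadpole n i).Adj a ⟨n-1, by omega⟩ ↔ a.val = n-2 := by
  have := a.isLt
  rw [tadpole_adj]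
  simp only [ne_eq, Fin.ext_iff]
  omega

lemma deg_ge {n i : ℕ} (hi : 3 ≤ i) (hn : i < n) (v : Fin n) (hv : v.val ≠ n - 1) :
    2 ≤ (tadpole n i).degree v := by
  have hvlt := v.isLt
  rw [← SimpleGraph.card_neighborFinset_eq_degree]
  apply Finset.one_lt_card.mpr
  by_cases h0 : v.val = 0
  · refine ⟨⟨1, by omega⟩, ?_, ⟨i-1, by omega⟩, ?_, ?_⟩ <;>
      simp only [SimpleGraph.mem_neighborFinset, tadpole_adj, ne_eq, Fin.ext_iff, Fin.val_mk, and_true, true_and, true_or, or_true] <;> omega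
  · refine ⟨⟨v.val - 1, by omega⟩, ?_, ⟨v.val + 1, by omega⟩, ?_, ?_⟩ <;>
      simp only [SimpleGraph.mem_neighborFinset, tadpole_adj, ne_eq, Fin.ext_iff, Fin.val_mk, and_true, true_and, true_or, or_true] <;> omega

lemma deg_last {n i : ℕ} (hi : 3 ≤ i) (hn : i < n) :
    (tadpole n i).degree (⟨n-1, by omega⟩ : Fin n) = 1 := by
  rw [← SimpleGraph.card_neighborFinset_eq_degree]
  have : (tadpole n i).neighborFinset ⟨n-1, by omega⟩ = {(⟨n-2, by omega⟩ : Fin n)} := by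
    ext w
    rw [SimpleGraph.mem_neighborFinset, SimpleGraph.adj_comm, adj_last hi hn,
      Finset.mem_singleton, Fin.ext_iff]
  rw [this, Finset.card_singleton]

lemma cross_mem {V : Type*} [Fintype V] [DecidableEq V] (G : SimpleGraph V)
    (U : Finset V) (a b : V) :
    s(a,b) ∈ crossEdges G U ↔ G.Adj a b ∧ ((a ∈ U ∧ b ∉ U) ∨ (a ∉ U ∧ b ∈ U)) := by
  simp [crossEdges, Finset.mem_filter, SimpleGraph.mem_edgeFinset, SimpleGraph.mem_edgeSet]

lemma cross_nonempty {n i : ℕ} (hi : 3 ≤ i) (hn : i < n) (U : Finset (Fin n))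
    (hU : U.Nonempty) (hdeg : ∀ v ∈ U, 2 ≤ (tadpole n i).degree v) :
    (crossEdges (tadpole n i) U).Nonempty := by
  have hlast : (⟨n-1, by omega⟩ : Fin n) ∉ U := by
    intro h
    have := hdeg _ h
    rw [deg_last hi hn] at this
    omega
  have hne : (U.image Fin.val).Nonempty := hU.image _
  set M := (U.image Fin.val).max' hne with hM
  obtain ⟨u, huU, huv⟩ := Finset.mem_image.mp ((U.image Fin.val).max'_mem hne)
  have h1 : M < n := by rw [hM, ← huv]; exact u.isLt
  have hMlt : M < n - 1 := by
    rcases Nat.lt_or_ge M (n-1) with h | h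
    · exact h
    · exfalso
      have : u = (⟨n-1, by omega⟩ : Fin n) := by
        apply Fin.ext
        simp only [Fin.val_mk]
        omega
      exact hlast (this ▸ huU)
  have hnext : (⟨M+1, by omega⟩ : Fin n) ∉ U := by
    intro h
    have := Finset.le_max' (U.image Fin.val) (M+1)
      (Finset.mem_image.mpr ⟨⟨M+1, by omega⟩, h, rfl⟩)
    omega
  refine ⟨s(u, ⟨M+1, by omega⟩), ?_⟩
  rw [cross_mem]
  refine ⟨?_, Or.inl ⟨huU, hnext⟩⟩
  rw [tadpole_adj]
  simp only [ne_eq, Fin.ext_iff, Fin.val_mk]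
  omega

lemma cross_U0 {n i : ℕ} (hi : 3 ≤ i) (hn : i < n) :
    crossEdges (tadpole n i) (Finset.univ.erase ⟨n-1, by omega⟩) =
      {s((⟨n-2, by omega⟩ : Fin n), (⟨n-1, by omega⟩ : Fin n))} := by
  ext e
  induction e using Sym2.ind with
  | _ a b =>
    rw [cross_mem, Finset.mem_singleton, Sym2.eq_iff]
    simp only [Finset.mem_erase, Finset.mem_univ, and_true, not_not, ne_eq]
    constructor
    · rintro ⟨hadj, ⟨ha, hb⟩ | ⟨ha, hb⟩⟩
      · left
        refine ⟨?_, hb⟩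
        rw [hb] at hadj
        exact Fin.ext ((adj_last hi hn a).mp hadj)
      · right
        refine ⟨ha, ?_⟩
        rw [ha] at hadj
        exact Fin.ext ((adj_last hi hn b).mp hadj.symm)
    · rintro (⟨ha, hb⟩ | ⟨ha, hb⟩)
      · subst ha; subst hb
        refine ⟨(adj_last hi hn _).mpr rfl, ?_⟩
        simp only [Fin.ext_iff, Fin.val_mk, not_true, and_true, true_and, and_false,
          false_and, or_false, false_or]
        omega
      · subst ha; subst hb
        refine ⟨((tadpole n i).adj_comm _ _).mp ((adj_last hi hn _).mpr rfl), ?_⟩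
        simp only [Fin.ext_iff, Fin.val_mk, not_true, and_true, true_and, and_false,
          false_and, or_false, false_or]
        omega

/-- The Dirichlet Cheeger constant of the tadpole graph `T_{n,i}` equals `1/(n-1)`. -/
theorem cheeger_tadpole (n i : ℕ) (hi : 3 ≤ i) (hn : i < n) :
    dCheeger (tadpole n i) = 1 / ((n : ℝ) - 1) := by
  have hn4 : 4 ≤ n := by omega
  have hcast : ((n:ℝ) - 1) = ((n - 1 : ℕ) : ℝ) := by
    rw [Nat.cast_sub (by omega)]; norm_num
  have hpos : (0:ℝ) < (n:ℝ) - 1 := by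
    rw [hcast]; exact_mod_cast Nat.sub_pos_of_lt (by omega)
  set last : Fin n := ⟨n-1, by omega⟩ with hlastdef
  set U₀ : Finset (Fin n) := Finset.univ.erase last with hU0def
  have hU0card : U₀.card = n - 1 := by
    rw [hU0def, Finset.card_erase_of_mem (Finset.mem_univ _), Finset.card_univ,
      Fintype.card_fin]
  have hmem : 1 / ((n:ℝ) - 1) ∈ {r | ∃ U : Finset (Fin n), U.Nonempty ∧
      (∀ v ∈ U, 2 ≤ (tadpole n i).degree v) ∧
      r = ((crossEdges (tadpole n i) U).card : ℝ) / U.card} := by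
    refine ⟨U₀, ⟨⟨0, by omega⟩, ?_⟩, ?_, ?_⟩
    · rw [hU0def, Finset.mem_erase]
      refine ⟨?_, Finset.mem_univ _⟩
      simp only [hlastdef, ne_eq, Fin.ext_iff, Fin.val_mk]
      omega
    · intro v hv
      apply deg_ge hi hn
      intro hval
      rw [hU0def, Finset.mem_erase] at hv
      exact hv.1 (Fin.ext (by simp [hlastdef, hval]))
    · rw [cross_U0 hi hn, hU0card, Finset.card_singleton, hcast]
      norm_num
  have hlb : ∀ r ∈ {r | ∃ U : Finset (Fin n), U.Nonempty ∧
      (∀ v ∈ U, 2 ≤ (tadpole n i).degree v) ∧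
      r = ((crossEdges (tadpole n i) U).card : ℝ) / U.card},
      1 / ((n:ℝ) - 1) ≤ r := by
    rintro r ⟨U, hUne, hdeg, rfl⟩
    have hc : 1 ≤ (crossEdges (tadpole n i) U).card :=
      Finset.Nonempty.card_pos (cross_nonempty hi hn U hUne hdeg)
    have hlastU : last ∉ U := by
      intro h
      have := hdeg _ h
      rw [hlastdef, deg_last hi hn] at this
      omega
    have hsub : U ⊆ U₀ := fun v hv => by
      rw [hU0def, Finset.mem_erase]
      exact ⟨fun he => hlastU (he ▸ hv), Finset.mem_univ _⟩
    have hu : U.card ≤ n - 1 := hU0card ▸ Finset.card_le_card hsub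
    have hu0 : (0:ℝ) < U.card := by exact_mod_cast hUne.card_pos
    rw [div_le_div_iff₀ hpos hu0, one_mul]
    calc (U.card : ℝ) ≤ (n:ℝ) - 1 := by
            rw [hcast]; exact_mod_cast hu
      _ ≤ (crossEdges (tadpole n i) U).card * ((n:ℝ) - 1) := by
            nlinarith [hpos, (by exact_mod_cast hc : (1:ℝ) ≤ ((crossEdges (tadpole n i) U).card : ℝ))]
  exact le_antisymm (csInf_le ⟨_, hlb⟩ hmem) (le_csInf ⟨_, hmem⟩ hlb)
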